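/- Let Λ : ℝ → ℝ be a nonnegative, convex, continuous function whose Young–Fenchel conjugate Λ*(y) := sup_{v ∈ ℝ} (y·v − Λ(v)) is finite at every natural number. Let f : ℂ → ℂ be an entire function with Taylor coefficients c_n satisfying |c_n| ≤ exp(−Λ*(n)) for all n ∈ ℕ, and suppose there exists ε₀ ∈ (0,1) such that S₀ := Σ_{n=0}^∞ exp(−ε₀·Λ*(n)) < ∞. Then for every r ≥ 1, M_f(r) ≤ S₀ · exp(Λ((log r)/(1−ε₀))). -/

import Mathlib

/-- Summary statement (B): let `Λ` be nonnegative, convex and continuous on `ℝ`, whose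
Young–Fenchel conjugate `Λ*(n) = sup_v (n·v - Λ(v))` is finite at every natural `n`.
If `f` is entire with Taylor coefficients satisfying `|c_n| ≤ exp(-Λ*(n))`, and
`S₀ = Σ_n exp(-ε₀·Λ*(n)) < ∞` for some `ε₀ ∈ (0,1)`, then for every `r ≥ 1`,
`M_f(r) ≤ S₀ · exp(Λ((log r)/(1-ε₀)))`. -/
theorem maximal_function_bound_from_conjugate_decay
    (Λ : ℝ → ℝ)
    (hΛ0 : ∀ v : ℝ, 0 ≤ Λ v)
    (hconv : ConvexOn ℝ Set.univ Λ)
    (hcont : Continuous Λ)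
    (hbdd : ∀ n : ℕ, BddAbove (Set.range fun v : ℝ => (n : ℝ) * v - Λ v))
    (f : ℂ → ℂ) (c : ℕ → ℂ)
    (hf : ∀ z : ℂ, HasSum (fun n : ℕ => c n * z ^ n) (f z))
    (hc : ∀ n : ℕ, ‖c n‖
      ≤ Real.exp (-(sSup (Set.range fun v : ℝ => (n : ℝ) * v - Λ v))))
    (ε₀ : ℝ) (hε₀ : ε₀ ∈ Set.Ioo (0 : ℝ) 1)
    (hS : Summable fun n : ℕ =>
      Real.exp (-ε₀ * sSup (Set.range fun v : ℝ => (n : ℝ) * v - Λ v))) :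
    ∀ r : ℝ, 1 ≤ r →
      sSup {x : ℝ | ∃ z : ℂ, ‖z‖ = r ∧ x = ‖f z‖}
        ≤ (∑' n : ℕ, Real.exp (-ε₀ * sSup (Set.range fun v : ℝ => (n : ℝ) * v - Λ v))) *
          Real.exp (Λ (Real.log r / (1 - ε₀))) := by
  obtain ⟨hε₀0, hε₀1⟩ := hε₀
  intro r hr
  set L : ℕ → ℝ := fun n => sSup (Set.range fun v : ℝ => (n : ℝ) * v - Λ v) with hLdef
  set v₀ : ℝ := Real.log r / (1 - ε₀) with hv₀
  have h1ε : (0:ℝ) < 1 - ε₀ := by linarith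
  have hr0 : (0:ℝ) < r := by linarith
  have hLge : ∀ n : ℕ, (n : ℝ) * v₀ - Λ v₀ ≤ L n := fun n =>
    le_csSup (hbdd n) ⟨v₀, rfl⟩
  have key : ∀ n : ℕ, Real.exp (-(L n)) * r ^ n ≤ Real.exp (-ε₀ * L n) * Real.exp (Λ v₀) := by
    intro n
    have hrn : r ^ n = Real.exp ((n:ℝ) * Real.log r) := by
      rw [← Real.log_pow, Real.exp_log (by positivity)]
    rw [hrn, ← Real.exp_add, ← Real.exp_add, Real.exp_le_exp]
    have h1 : (n : ℝ) * Real.log r = (1 - ε₀) * ((n:ℝ) * v₀) := by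
      rw [hv₀]; field_simp
    nlinarith [hLge n, hΛ0 v₀, mul_le_mul_of_nonneg_left (hLge n) h1ε.le]
  apply Real.sSup_le
  · rintro x ⟨z, hz, rfl⟩
    have hsum : Summable fun n : ℕ => Real.exp (-ε₀ * L n) * Real.exp (Λ v₀) :=
      hS.mul_right _
    have hterm : ∀ n : ℕ, ‖c n * z ^ n‖ ≤ Real.exp (-ε₀ * L n) * Real.exp (Λ v₀) := by
      intro n
      calc ‖c n * z ^ n‖ = ‖c n‖ * r ^ n := by
            simp [norm_mul, norm_pow, hz]
        _ ≤ Real.exp (-(L n)) * r ^ n :=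
            mul_le_mul_of_nonneg_right (hc n) (by positivity)
        _ ≤ _ := key n
    have hnorm : Summable fun n : ℕ => ‖c n * z ^ n‖ :=
      Summable.of_nonneg_of_le (fun n => norm_nonneg _) hterm hsum
    calc ‖f z‖ = ‖∑' n : ℕ, c n * z ^ n‖ := by
          rw [(hf z).tsum_eq]
      _ ≤ ∑' n : ℕ, ‖c n * z ^ n‖ := norm_tsum_le_tsum_norm hnorm
      _ ≤ ∑' n : ℕ, Real.exp (-ε₀ * L n) * Real.exp (Λ v₀) :=
          Summable.tsum_le_tsum hterm hnorm hsum
      _ = (∑' n : ℕ, Real.exp (-ε₀ * L n)) * Real.exp (Λ v₀) := tsum_mul_right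
  · exact mul_nonneg (tsum_nonneg fun n => (Real.exp_pos _).le) (Real.exp_pos _).le
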